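/- (Dilcher's identity) For any positive integers n and s, ∑_{k=1}^n [n choose k]_q (-1)^k q^{binom(k,2)+sk} / [k]_q^s = - ∑_{1≤j_1≤j_2≤⋯≤j_s≤n} ∏_{i=1}^s q^{j_i}/[j_i]_q. -/

import Mathlib

open scoped Classical

/-- The Gaussian `q`-binomial coefficient `[n choose k]_q = ∏_{i=1}^k (1-q^{n-k+i})/(1-q^i)`. -/
noncomputable def qbinom (q : ℂ) (n k : ℕ) : ℂ :=
  ∏ i ∈ Finset.range k, (1 - q ^ (n - k + 1 + i)) / (1 - q ^ (1 + i))

/-- The `q`-integer `[k]_q = (1-q^k)/(1-q)`. -/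
noncomputable def qint (q : ℂ) (k : ℕ) : ℂ := (1 - q ^ k) / (1 - q)

lemma qbinom_self (q : ℂ) (n : ℕ) (hq : ∀ i, 1 ≤ i → i ≤ n → q ^ i ≠ 1) :
    qbinom q n n = 1 := by
  unfold qbinom
  rw [Finset.prod_congr rfl (g := fun _ => (1:ℂ)) ?_, Finset.prod_const_one]
  intro i hi
  rw [Finset.mem_range] at hi
  have h1 : n - n + 1 + i = 1 + i := by omega
  rw [h1, div_self]
  intro h
  exact hq (1+i) (by omega) (by omega) (sub_eq_zero.mp h).symm

lemma absorb (q : ℂ) (n k : ℕ) (h1 : 1 ≤ k) (h2 : k ≤ n) :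
    qbinom q n k = qbinom q (n-1) (k-1) * ((1 - q^n) / (1 - q^k)) := by
  obtain ⟨m, rfl⟩ : ∃ m, k = m + 1 := ⟨k - 1, by omega⟩
  unfold qbinom
  rw [Finset.prod_range_succ]
  have e1 : n - (m+1) + 1 + m = n := by omega
  have e2 : (m+1) - 1 = m := by omega
  rw [e1, e2, (by omega : 1 + m = m + 1)]
  congr 1
  apply Finset.prod_congr rfl
  intro i _
  have : n - (m+1) + 1 + i = n - 1 - m + 1 + i := by omega
  rw [this]

lemma F2 (q : ℂ) (n k : ℕ) (h1 : 1 ≤ k) (h2 : k + 1 ≤ n) :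
    qbinom q n k * (1 - q^(n-k)) = qbinom q (n-1) k * (1 - q^n) := by
  unfold qbinom
  rw [Finset.prod_div_distrib, Finset.prod_div_distrib]
  rw [div_mul_eq_mul_div, div_mul_eq_mul_div]
  congr 1
  have key : (∏ i ∈ Finset.range k, (1 - q ^ (n - k + 1 + i))) * (1 - q^(n-k))
      = (∏ i ∈ Finset.range k, (1 - q ^ (n - 1 - k + 1 + i))) * (1 - q^n) := by
    have l1 : (∏ i ∈ Finset.range (k+1), (1 - q ^ (n - k + i)))
        = (∏ i ∈ Finset.range k, (1 - q ^ (n - k + 1 + i))) * (1 - q^(n-k)) := by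
      rw [Finset.prod_range_succ']
      congr 1
      apply Finset.prod_congr rfl; intro i _; congr 2; omega
    have l2 : (∏ i ∈ Finset.range (k+1), (1 - q ^ (n - k + i)))
        = (∏ i ∈ Finset.range k, (1 - q ^ (n - 1 - k + 1 + i))) * (1 - q^n) := by
      rw [Finset.prod_range_succ]
      congr 1
      · apply Finset.prod_congr rfl; intro i _; congr 2; omega
      · congr 2; omega
    rw [← l1, l2]
  exact key

section
variable (q : ℂ) (n : ℕ)

lemma sub_pow_ne (hq : ∀ i, 1 ≤ i → i ≤ n → q ^ i ≠ 1) (i : ℕ) (h1 : 1 ≤ i) (h2 : i ≤ n) : (1 : ℂ) - q ^ i ≠ 0 := by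
  intro h
  exact hq i h1 h2 (sub_eq_zero.mp h).symm

lemma qint_ne_zero (hq : ∀ i, 1 ≤ i → i ≤ n → q ^ i ≠ 1) (k : ℕ) (h1 : 1 ≤ k) (h2 : k ≤ n) : qint q k ≠ 0 := by
  have h3 : (1:ℂ) - q ^ k ≠ 0 := sub_pow_ne q n hq k h1 h2
  have h4 : (1:ℂ) - q ^ 1 ≠ 0 := sub_pow_ne q n hq 1 le_rfl (le_trans h1 h2)
  rw [pow_one] at h4
  exact div_ne_zero h3 h4

lemma pascal (hq : ∀ i, 1 ≤ i → i ≤ n → q ^ i ≠ 1) (k : ℕ) (h1 : 1 ≤ k) (h2 : k + 1 ≤ n) :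
    qbinom q n k = qbinom q (n-1) k + q^(n-k) * qbinom q (n-1) (k-1) := by
  have hn : (1:ℂ) - q^n ≠ 0 := sub_pow_ne q n hq n (by omega) le_rfl
  have hk : (1:ℂ) - q^k ≠ 0 := sub_pow_ne q n hq k h1 (by omega)
  have e1 : qbinom q (n-1) (k-1) = qbinom q n k * (1 - q^k) / (1 - q^n) := by
    rw [absorb q n k h1 (by omega)]
    field_simp
  have e2 : qbinom q (n-1) k = qbinom q n k * (1 - q^(n-k)) / (1 - q^n) := by
    rw [eq_div_iff hn, ← F2 q n k h1 h2]
  rw [e1, e2]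
  have e3 : q^(n-k) * q^k = q^n := by rw [← pow_add]; congr 1; omega
  field_simp
  rw [← e3]; ring

end

noncomputable def Lsum (q : ℂ) (n s : ℕ) : ℂ :=
  ∑ k ∈ Finset.Icc 1 n,
    qbinom q n k * (-1) ^ k * q ^ (Nat.choose k 2 + s * k) / (qint q k) ^ s

lemma Lsplit (q : ℂ) (n : ℕ) (hn : 1 ≤ n) (hq : ∀ i, 1 ≤ i → i ≤ n → q ^ i ≠ 1)
    (a : ℕ → ℂ) :
    ∑ k ∈ Finset.Icc 1 n, qbinom q n k * a k
    = ∑ k ∈ Finset.Icc 1 (n-1), qbinom q (n-1) k * a k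
      + ∑ k ∈ Finset.Icc 1 n, q^(n-k) * qbinom q (n-1) (k-1) * a k := by
  have hmem : n ∉ Finset.Icc 1 (n-1) := by simp; omega
  have hins : Finset.Icc 1 n = insert n (Finset.Icc 1 (n-1)) := by
    ext x; simp [Finset.mem_insert, Finset.mem_Icc]; omega
  rw [hins, Finset.sum_insert hmem, Finset.sum_insert hmem]
  rw [qbinom_self q n hq, Nat.sub_self, pow_zero,
      qbinom_self q (n-1) (fun i h1 h2 => hq i h1 (by omega))]
  have step : ∀ k ∈ Finset.Icc 1 (n-1), qbinom q n k * a k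
      = qbinom q (n-1) k * a k + q^(n-k) * qbinom q (n-1) (k-1) * a k := by
    intro k hk
    rw [Finset.mem_Icc] at hk
    rw [pascal q n hq k hk.1 (by omega)]
    ring
  rw [Finset.sum_congr rfl step, Finset.sum_add_distrib]
  ring

lemma Icc_shift (f : ℕ → ℂ) (n : ℕ) :
    ∑ k ∈ Finset.Icc 1 n, f k = ∑ j ∈ Finset.range n, f (1+j) := by
  rw [← Finset.Ico_add_one_right_eq_Icc, Finset.sum_Ico_eq_sum_range]
  simp

lemma L0form (q : ℂ) (m : ℕ) : Lsum q m 0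
    = ∑ k ∈ Finset.Icc 1 m, qbinom q m k * ((-1)^k * q^(Nat.choose k 2)) := by
  unfold Lsum
  apply Finset.sum_congr rfl
  intro k _
  simp only [Nat.zero_mul, Nat.add_zero, pow_zero, div_one]
  ring

lemma choose2_succ (j : ℕ) : Nat.choose (1+j) 2 = Nat.choose j 2 + j := by
  rw [Nat.add_comm 1 j]
  show Nat.choose j 1 + Nat.choose j 2 = Nat.choose j 2 + j
  rw [Nat.choose_one_right]; omega

lemma Lzero (q : ℂ) : ∀ n, (∀ i, 1 ≤ i → i ≤ n → q ^ i ≠ 1) → 1 ≤ n →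
    Lsum q n 0 = -1 := by
  intro n
  induction n with
  | zero => intro _ h; omega
  | succ n ih =>
    intro hq _
    have hq' : ∀ i, 1 ≤ i → i ≤ n → q^i ≠ 1 := fun i h1 h2 => hq i h1 (by omega)
    rw [L0form, Lsplit q (n+1) (by omega) hq (fun k => (-1)^k * q^(Nat.choose k 2))]
    simp only [Nat.add_sub_cancel]
    have e2 : ∑ k ∈ Finset.Icc 1 (n+1),
          q^((n+1)-k) * qbinom q n (k-1) * ((-1)^k * q^(Nat.choose k 2))
        = -q^n * ∑ j ∈ Finset.range (n+1), qbinom q n j * ((-1)^j * q^(Nat.choose j 2)) := by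
      rw [Icc_shift, Finset.mul_sum]
      apply Finset.sum_congr rfl
      intro j hj
      rw [Finset.mem_range] at hj
      have h1 : (1+j) - 1 = j := by omega
      have h2 : (-1:ℂ)^(1+j) = -(-1)^j := by rw [pow_add, pow_one]; ring
      have h3 : q^((n+1)-(1+j)) * q^(Nat.choose (1+j) 2) = q^n * q^(Nat.choose j 2) := by
        rw [← pow_add, ← pow_add]
        congr 1
        have := choose2_succ j
        omega
      rw [h1, h2]
      calc q^((n+1)-(1+j)) * qbinom q n j * (-(-1)^j * q^(Nat.choose (1+j) 2))
          = -((q^((n+1)-(1+j)) * q^(Nat.choose (1+j) 2)) * (qbinom q n j * (-1)^j)) := by ring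
        _ = -(q^n * q^(Nat.choose j 2) * (qbinom q n j * (-1)^j)) := by rw [h3]
        _ = -q^n * (qbinom q n j * ((-1)^j * q^(Nat.choose j 2))) := by ring
    rw [e2]
    have e3 : ∑ j ∈ Finset.range (n+1), qbinom q n j * ((-1)^j * q^(Nat.choose j 2))
        = 1 + ∑ k ∈ Finset.Icc 1 n, qbinom q n k * ((-1)^k * q^(Nat.choose k 2)) := by
      rw [Finset.sum_range_succ', Icc_shift]
      have h0 : qbinom q n 0 * ((-1:ℂ)^0 * q^(Nat.choose 0 2)) = 1 := by
        simp [qbinom]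
      rw [h0, add_comm]
      congr 1
      apply Finset.sum_congr rfl
      intro x _
      rw [Nat.add_comm 1 x]
    rw [e3]
    rcases Nat.eq_zero_or_pos n with h | h
    · subst h; simp
    · have hs : ∑ k ∈ Finset.Icc 1 n, qbinom q n k * ((-1)^k * q^(Nat.choose k 2)) = -1 := by
        rw [← L0form]; exact ih hq' h
      rw [hs]; ring

lemma alg (X P Q R u v w z c : ℂ) (hP : P ≠ 0) (hQ : Q ≠ 0) (hR : R ≠ 0) (s : ℕ)
    (h : w * u = z * v) :
    w * (X * P / Q) * (c * u / (P/R)^(s+1)) = z / (Q/R) * (X * (c * v / (P/R)^s)) := by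
  have l : w * (X * P / Q) * (c * u / (P/R)^(s+1))
      = (w*u) * (c * X * R^(s+1) / (Q * P^s)) := by
    rw [div_pow]; field_simp; ring
  have r : z / (Q/R) * (X * (c * v / (P/R)^s))
      = (z*v) * (c * X * R^(s+1) / (Q * P^s)) := by
    rw [div_pow]; field_simp; ring
  rw [l, r, h]

lemma Lform (q : ℂ) (m t : ℕ) : Lsum q m t
    = ∑ k ∈ Finset.Icc 1 m,
        qbinom q m k * ((-1)^k * q^(Nat.choose k 2 + t*k)/(qint q k)^t) := by
  unfold Lsum
  apply Finset.sum_congr rfl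
  intro k _
  ring

lemma Lrec (q : ℂ) (n s : ℕ) (hq : ∀ i, 1 ≤ i → i ≤ n+1 → q^i ≠ 1) :
    Lsum q (n+1) (s+1) = Lsum q n (s+1) + q^(n+1)/qint q (n+1) * Lsum q (n+1) s := by
  rw [Lform q (n+1) (s+1)]
  rw [Lsplit q (n+1) (by omega) hq
      (fun k => (-1)^k * q^(Nat.choose k 2 + (s+1)*k)/(qint q k)^(s+1))]
  simp only [Nat.add_sub_cancel]
  rw [← Lform q n (s+1)]
  congr 1
  rw [Lform q (n+1) s, Finset.mul_sum]
  apply Finset.sum_congr rfl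
  intro k hk
  rw [Finset.mem_Icc] at hk
  have hR : (1:ℂ) - q ≠ 0 := by
    have := sub_pow_ne q (n+1) hq 1 le_rfl (by omega); rwa [pow_one] at this
  have hP : (1:ℂ) - q^k ≠ 0 := sub_pow_ne q (n+1) hq k hk.1 hk.2
  have hQ : (1:ℂ) - q^(n+1) ≠ 0 := sub_pow_ne q (n+1) hq (n+1) (by omega) le_rfl
  have habs : qbinom q n (k-1) = qbinom q (n+1) k * (1-q^k) / (1-q^(n+1)) := by
    rw [absorb q (n+1) k hk.1 hk.2]
    simp only [Nat.add_sub_cancel]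
    field_simp
  have epow : q^((n+1)-k) * q^(Nat.choose k 2 + (s+1)*k)
      = q^(n+1) * q^(Nat.choose k 2 + s*k) := by
    rw [← pow_add, ← pow_add]
    congr 1
    have h : (s+1)*k = s*k + k := by ring
    omega
  rw [habs]
  simp only [qint]
  exact alg _ _ _ _ _ _ _ _ _ hP hQ hR s epow

noncomputable def Ssum (q : ℂ) (n s : ℕ) : ℂ :=
  ∑ f ∈ (Fintype.piFinset fun _ : Fin s => Finset.Icc 1 n).filter
      (fun f => Monotone f),
    ∏ i : Fin s, q ^ (f i) / qint q (f i)

lemma Ssum_zero (q : ℂ) (n : ℕ) : Ssum q n 0 = 1 := by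
  unfold Ssum
  rw [Finset.sum_congr rfl (g := fun _ => (1:ℂ)) (fun f _ => by simp)]
  rw [Finset.sum_const, nsmul_eq_mul, mul_one]
  norm_cast

lemma Ssum_nil (q : ℂ) (s : ℕ) : Ssum q 0 (s+1) = 0 := by
  unfold Ssum
  rw [show (Fintype.piFinset fun _ : Fin (s+1) => Finset.Icc 1 0).filter
      (fun f => Monotone f) = ∅ from ?_, Finset.sum_empty]
  ext f
  simp only [Finset.mem_filter, Fintype.mem_piFinset, Finset.notMem_empty, iff_false]
  rintro ⟨h1, -⟩
  have := h1 0
  simp at this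

lemma monotone_snoc {s : ℕ} (g : Fin s → ℕ) (a : ℕ) (hg : Monotone g)
    (hle : ∀ j, g j ≤ a) : Monotone (Fin.snoc g a : Fin (s+1) → ℕ) := by
  rw [Fin.monotone_iff_le_succ]
  intro i
  rw [Fin.snoc_castSucc]
  rcases Fin.eq_castSucc_or_eq_last i.succ with ⟨j, hj⟩ | h
  · rw [hj, Fin.snoc_castSucc]
    apply hg
    have : i.castSucc < j.castSucc := hj ▸ (Fin.castSucc_lt_succ : i.castSucc < i.succ)
    exact le_of_lt this
  · rw [h, Fin.snoc_last]
    exact hle i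

lemma Srec (q : ℂ) (n s : ℕ) :
    Ssum q (n+1) (s+1) = Ssum q n (s+1) + q^(n+1)/qint q (n+1) * Ssum q (n+1) s := by
  classical
  unfold Ssum
  set A := (Fintype.piFinset fun _ : Fin (s+1) => Finset.Icc 1 (n+1)).filter
      (fun f => Monotone f) with hA
  rw [← Finset.sum_filter_add_sum_filter_not A (fun f => f (Fin.last s) = n+1)]
  have part1 : A.filter (fun f => ¬ f (Fin.last s) = n+1)
      = (Fintype.piFinset fun _ : Fin (s+1) => Finset.Icc 1 n).filter
          (fun f => Monotone f) := by
    ext f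
    constructor
    · intro hf
      rw [Finset.mem_filter] at hf ⊢
      obtain ⟨hfA, hne⟩ := hf
      rw [hA, Finset.mem_filter, Fintype.mem_piFinset] at hfA
      obtain ⟨hmem, hmono⟩ := hfA
      refine ⟨?_, hmono⟩
      rw [Fintype.mem_piFinset]
      intro i
      have h1 : f i ≤ f (Fin.last s) := hmono (Fin.le_last i)
      have h2 := hmem (Fin.last s)
      have h3 := hmem i
      rw [Finset.mem_Icc] at h2 h3 ⊢
      omega
    · intro hf
      rw [Finset.mem_filter, Fintype.mem_piFinset] at hf
      obtain ⟨hmem, hmono⟩ := hf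
      have h2 := hmem (Fin.last s)
      rw [Finset.mem_Icc] at h2
      rw [Finset.mem_filter]
      constructor
      · rw [hA, Finset.mem_filter, Fintype.mem_piFinset]
        refine ⟨fun i => ?_, hmono⟩
        have := hmem i
        rw [Finset.mem_Icc] at this ⊢
        omega
      · omega
  have part2 : ∑ f ∈ A.filter (fun f => f (Fin.last s) = n+1),
        ∏ i : Fin (s+1), q ^ (f i) / qint q (f i)
      = q^(n+1)/qint q (n+1) *
        ∑ g ∈ (Fintype.piFinset fun _ : Fin s => Finset.Icc 1 (n+1)).filter
            (fun g => Monotone g),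
          ∏ i : Fin s, q ^ (g i) / qint q (g i) := by
    rw [Finset.mul_sum]
    refine Finset.sum_bij' (fun f _ => Fin.init f) (fun g _ => Fin.snoc g (n+1))
      ?_ ?_ ?_ ?_ ?_
    · intro f hf
      rw [Finset.mem_filter] at hf
      obtain ⟨hfA, hlast⟩ := hf
      rw [hA, Finset.mem_filter, Fintype.mem_piFinset] at hfA
      obtain ⟨hmem, hmono⟩ := hfA
      rw [Finset.mem_filter, Fintype.mem_piFinset]
      refine ⟨fun i => hmem _, ?_⟩
      intro a b hab
      exact hmono (Fin.castSucc_le_castSucc_iff.mpr hab)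
    · intro g hg
      beta_reduce
      rw [Finset.mem_filter, Fintype.mem_piFinset] at hg
      obtain ⟨hmem, hmono⟩ := hg
      rw [Finset.mem_filter]
      refine ⟨?_, Fin.snoc_last _ _⟩
      rw [hA, Finset.mem_filter, Fintype.mem_piFinset]
      constructor
      · intro i
        rcases Fin.eq_castSucc_or_eq_last i with ⟨j, hj⟩ | h
        · rw [hj, Fin.snoc_castSucc]; exact hmem j
        · rw [h, Fin.snoc_last]
          rw [Finset.mem_Icc]
          omega
      · apply monotone_snoc _ _ hmono
        intro j
        have := hmem j
        rw [Finset.mem_Icc] at this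
        omega
    · intro f hf
      beta_reduce
      rw [Finset.mem_filter] at hf
      conv_lhs => rw [← hf.2]
      exact Fin.snoc_init_self f
    · intro g hg
      beta_reduce
      exact Fin.init_snoc _ _
    · intro f hf
      beta_reduce
      rw [Finset.mem_filter] at hf
      rw [Fin.prod_univ_castSucc, hf.2, mul_comm]
      rfl
  rw [part1, part2]
  ring

lemma Lsum_nil (q : ℂ) (s : ℕ) : Lsum q 0 s = 0 := by
  unfold Lsum
  simp

lemma key (q : ℂ) : ∀ s n, (∀ i, 1 ≤ i → i ≤ n → q ^ i ≠ 1) → (1 ≤ n ∨ 1 ≤ s) →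
    Lsum q n s = -Ssum q n s := by
  intro s
  induction s with
  | zero =>
    intro n hq hn
    rcases hn with hn | hn
    · rw [Lzero q n hq hn, Ssum_zero]
    · omega
  | succ s ihs =>
    intro n
    induction n with
    | zero =>
      intro _ _
      rw [Lsum_nil, Ssum_nil]
      simp
    | succ n ihn =>
      intro hq _
      have hq' : ∀ i, 1 ≤ i → i ≤ n → q^i ≠ 1 := fun i h1 h2 => hq i h1 (by omega)
      rw [Lrec q n s hq, Srec q n s]
      rw [ihn hq' (Or.inr (by omega)), ihs (n+1) hq (Or.inl (by omega))]
      ring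

/-- Dilcher's identity. -/
theorem stmt_5 (n s : ℕ) (hn : 1 ≤ n) (hs : 1 ≤ s) (q : ℂ)
    (hq : ∀ i, 1 ≤ i → i ≤ n → q ^ i ≠ 1) :
    ∑ k ∈ Finset.Icc 1 n,
        qbinom q n k * (-1) ^ k * q ^ (Nat.choose k 2 + s * k) / (qint q k) ^ s
      = - ∑ f ∈ (Fintype.piFinset fun _ : Fin s => Finset.Icc 1 n).filter
          (fun f => Monotone f),
          ∏ i : Fin s, q ^ (f i) / qint q (f i) := by
  exact key q s n hq (Or.inl hn)
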